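/- Let Σ be a symmetric block matrix whose diagonal blocks Σ_{i,i} are symmetric positive definite, and suppose Σ is block strictly diagonally dominant in the spectral norm: ‖Σ_{i,i}^{-1}‖^{-1} > ∑_{k≠i}‖Σ_{i,k}‖ for all i. Then every eigenvalue λ of Σ satisfies λ > 0; more precisely, for each eigenvalue λ there is an index i and an eigenvalue σ of Σ_{i,i} with |σ − λ| < σ_min(Σ_{i,i}), where σ_min denotes the smallest eigenvalue of Σ_{i,i}. -/

import Mathlib

open Matrix Finset MeasureTheory Real

noncomputable def specNorm {d : ℕ} (A : Matrix (Fin d) (Fin d) ℝ) : ℝ :=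
  ‖(Matrix.toEuclideanLin A).toContinuousLinearMap‖

noncomputable def specNormC {d : ℕ} (A : Matrix (Fin d) (Fin d) ℂ) : ℝ :=
  ‖(Matrix.toEuclideanLin A).toContinuousLinearMap‖

/-- The `(i,j)` block of a blocked matrix. -/
def blk {𝕜 : Type*} {n d : ℕ} (S : Matrix (Fin n × Fin d) (Fin n × Fin d) 𝕜) (i j : Fin n) :
    Matrix (Fin d) (Fin d) 𝕜 := fun a b => S (i, a) (j, b)

/-- Smallest real eigenvalue (as the infimum of the real spectrum). -/
noncomputable def lamMin {m : Type*} [Fintype m] [DecidableEq m]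
    (A : Matrix m m ℝ) : ℝ := sInf (spectrum ℝ A)

/-- Smallest real eigenvalue of a complex matrix. -/
noncomputable def lamMinC {m : Type*} [Fintype m] [DecidableEq m]
    (A : Matrix m m ℂ) : ℝ := sInf {x : ℝ | (x : ℂ) ∈ spectrum ℂ A}

lemma specNorm_nonneg {d : ℕ} (B : Matrix (Fin d) (Fin d) ℝ) : 0 ≤ specNorm B :=
  norm_nonneg _

lemma norm_mulVec_le {d : ℕ} (B : Matrix (Fin d) (Fin d) ℝ) (x : Fin d → ℝ) :
    ‖(WithLp.equiv 2 (Fin d → ℝ)).symm (B *ᵥ x)‖ ≤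
      specNorm B * ‖(WithLp.equiv 2 (Fin d → ℝ)).symm x‖ := by
  have h := (Matrix.toEuclideanLin B).toContinuousLinearMap.le_opNorm
    ((WithLp.equiv 2 (Fin d → ℝ)).symm x)
  exact h

lemma herm_lower {d : ℕ} {A : Matrix (Fin d) (Fin d) ℝ} (hA : A.IsHermitian)
    (lam c : ℝ) (hc : 0 ≤ c) (h : ∀ k, c ≤ |hA.eigenvalues k - lam|) (x : Fin d → ℝ) :
    c * ‖(WithLp.equiv 2 (Fin d → ℝ)).symm x‖ ≤
      ‖(WithLp.equiv 2 (Fin d → ℝ)).symm (A *ᵥ x - lam • x)‖ := by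
  set E := (WithLp.equiv 2 (Fin d → ℝ)).symm with hE
  set X : EuclideanSpace ℝ (Fin d) := E x with hX
  set Y : EuclideanSpace ℝ (Fin d) := E (A *ᵥ x - lam • x) with hYdef
  set b := hA.eigenvectorBasis with hb
  have hY : Y = Matrix.toEuclideanLin A X - lam • X := rfl
  have hrepr : ∀ k, b.repr Y k = (hA.eigenvalues k - lam) * b.repr X k := by
    intro k
    have hs := (Matrix.isHermitian_iff_isSymmetric.mp hA)
    have hTb : Matrix.toEuclideanLin A (b k) = hA.eigenvalues k • b k := by
      have h1 := congrArg (WithLp.equiv 2 (Fin d → ℝ)).symm (hA.mulVec_eigenvectorBasis k)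
      simpa [Matrix.toEuclideanLin_apply] using h1
    rw [OrthonormalBasis.repr_apply_apply, OrthonormalBasis.repr_apply_apply, hY,
      inner_sub_right, real_inner_smul_right, ← hs, hTb, real_inner_smul_left]
    ring
  have hnorm : ∀ z : EuclideanSpace ℝ (Fin d), ‖z‖ ^ 2 = ∑ k, (b.repr z k) ^ 2 := by
    intro z
    rw [← b.repr.norm_map z, EuclideanSpace.norm_eq, Real.sq_sqrt (by positivity)]
    simp [Real.norm_eq_abs, sq_abs]
  have key : (c * ‖X‖) ^ 2 ≤ ‖Y‖ ^ 2 := by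
    rw [mul_pow, hnorm X, hnorm Y, Finset.mul_sum]
    apply Finset.sum_le_sum
    intro k _
    rw [hrepr k, mul_pow]
    have h2 : c ^ 2 ≤ (hA.eigenvalues k - lam) ^ 2 := by
      have := h k
      nlinarith [abs_nonneg (hA.eigenvalues k - lam), sq_abs (hA.eigenvalues k - lam)]
    nlinarith [sq_nonneg (b.repr X k)]
  calc c * ‖X‖ = Real.sqrt ((c * ‖X‖) ^ 2) := (Real.sqrt_sq (by positivity)).symm
    _ ≤ Real.sqrt (‖Y‖ ^ 2) := Real.sqrt_le_sqrt key
    _ = ‖Y‖ := Real.sqrt_sq (norm_nonneg _)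

lemma posdef_spec_lower {d : ℕ} {A : Matrix (Fin d) (Fin d) ℝ} (hA : A.PosDef)
    {μ : ℝ} (hμ : μ ∈ spectrum ℝ A) : (specNorm A⁻¹)⁻¹ ≤ μ := by
  rw [← AlgEquiv.spectrum_eq (Matrix.toLinAlgEquiv') A] at hμ
  obtain ⟨v, hv⟩ := (Module.End.hasEigenvalue_iff_mem_spectrum.mpr hμ).exists_hasEigenvector
  have hvne : v ≠ 0 := hv.right
  have hAv : A *ᵥ v = μ • v := by
    have := hv.apply_eq_smul
    simpa [Matrix.toLinAlgEquiv'_apply, Matrix.toLin'_apply] using this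
  have hdot : 0 < v ⬝ᵥ v := by
    obtain ⟨i0, hi0⟩ := Function.ne_iff.mp hvne
    have : 0 < ∑ i, v i * v i := by
      apply Finset.sum_pos' (fun i _ => mul_self_nonneg _) ⟨i0, Finset.mem_univ _, mul_self_pos.mpr hi0⟩
    simpa [dotProduct] using this
  have hμpos : 0 < μ := by
    have h2 := hA.dotProduct_mulVec_pos hvne
    rw [hAv] at h2
    simp only [star_trivial, dotProduct_smul, smul_eq_mul] at h2
    nlinarith
  have hdet : IsUnit A.det := isUnit_iff_ne_zero.mpr hA.det_pos.ne'
  have hinv : v = μ • (A⁻¹ *ᵥ v) := by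
    have h3 : A⁻¹ *ᵥ (A *ᵥ v) = v := by
      rw [Matrix.mulVec_mulVec, Matrix.nonsing_inv_mul A hdet, Matrix.one_mulVec]
    conv_lhs => rw [← h3]
    rw [hAv, Matrix.mulVec_smul]
  set E := (WithLp.equiv 2 (Fin d → ℝ)).symm with hE
  have hnv : 0 < ‖E v‖ := by
    rw [norm_pos_iff]
    intro h0
    exact hvne ((WithLp.equiv 2 (Fin d → ℝ)).symm.injective (h0.trans rfl))
  have hEsmul : E (μ • (A⁻¹ *ᵥ v)) = μ • E (A⁻¹ *ᵥ v) := rfl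
  have hle : ‖E v‖ ≤ μ * (specNorm A⁻¹ * ‖E v‖) := by
    calc ‖E v‖ = ‖E (μ • (A⁻¹ *ᵥ v))‖ := by rw [← hinv]
      _ = |μ| * ‖E (A⁻¹ *ᵥ v)‖ := by rw [hEsmul, norm_smul, Real.norm_eq_abs]
      _ = μ * ‖E (A⁻¹ *ᵥ v)‖ := by rw [abs_of_pos hμpos]
      _ ≤ μ * (specNorm A⁻¹ * ‖E v‖) :=
          mul_le_mul_of_nonneg_left (norm_mulVec_le _ _) hμpos.le
  have h1 : 1 ≤ μ * specNorm A⁻¹ := by nlinarith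
  have hs : 0 < specNorm A⁻¹ := by nlinarith
  rw [inv_le_iff_one_le_mul₀ hs]
  nlinarith

/-- for a symmetric block matrix with SPD diagonal blocks satisfying
block strict diagonal dominance, every eigenvalue λ is positive; more precisely there
is a block i and an eigenvalue σ of Σᵢᵢ with |σ − λ| < λ_min(Σᵢᵢ). -/
theorem stmt3 {n d : ℕ} (S : Matrix (Fin n × Fin d) (Fin n × Fin d) ℝ)
    (hsymm : S.IsSymm)
    (hdiag : ∀ i, (blk S i i).PosDef)
    (hdom : ∀ i, ∑ k ∈ univ \ {i}, specNorm (blk S i k) < (specNorm (blk S i i)⁻¹)⁻¹)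
    (lam : ℝ) (hlam : lam ∈ spectrum ℝ S) :
    0 < lam ∧ ∃ i, ∃ σ ∈ spectrum ℝ (blk S i i), |σ - lam| < lamMin (blk S i i) := by
  -- extract an eigenvector
  rw [← AlgEquiv.spectrum_eq (Matrix.toLinAlgEquiv') S] at hlam
  obtain ⟨v, hv⟩ := (Module.End.hasEigenvalue_iff_mem_spectrum.mpr hlam).exists_hasEigenvector
  have hvne : v ≠ 0 := hv.right
  have hveq : S *ᵥ v = lam • v := by
    have := hv.apply_eq_smul
    simpa [Matrix.toLinAlgEquiv'_apply, Matrix.toLin'_apply] using this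
  obtain ⟨p0, hp0⟩ := Function.ne_iff.mp hvne
  set E := (WithLp.equiv 2 (Fin d → ℝ)).symm with hE
  set vb : Fin n → Fin d → ℝ := fun j a => v (j, a) with hvb
  -- the block equation
  have hblock : ∀ i : Fin n, blk S i i *ᵥ vb i - lam • vb i
      = - ∑ j ∈ univ \ {i}, blk S i j *ᵥ vb j := by
    intro i
    funext a
    have h1 : (S *ᵥ v) (i, a) = lam * v (i, a) := by rw [hveq]; rfl
    have h2 : (S *ᵥ v) (i, a) = ∑ j, (blk S i j *ᵥ vb j) a := by
      simp only [Matrix.mulVec, dotProduct]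
      rw [Fintype.sum_prod_type]
      rfl
    have h3 : ∑ j, (blk S i j *ᵥ vb j) a
        = (∑ j ∈ univ \ {i}, (blk S i j *ᵥ vb j) a) + (blk S i i *ᵥ vb i) a := by
      rw [← Finset.sum_eq_sum_sdiff_singleton_add (Finset.mem_univ i)]
    have h4 : (∑ j ∈ univ \ {i}, blk S i j *ᵥ vb j) a
        = ∑ j ∈ univ \ {i}, (blk S i j *ᵥ vb j) a := Finset.sum_apply a _ _
    simp only [Pi.sub_apply, Pi.smul_apply, Pi.neg_apply, smul_eq_mul]
    rw [h4]
    rw [h2, h3] at h1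
    linarith
  -- choose the block with maximal norm
  have hnonempty : (univ : Finset (Fin n)).Nonempty := ⟨p0.1, Finset.mem_univ _⟩
  obtain ⟨i, -, hmax⟩ := Finset.exists_max_image univ (fun j => ‖E (vb j)‖) hnonempty
  have hNi : 0 < ‖E (vb i)‖ := by
    have h0 : 0 < ‖E (vb p0.1)‖ := by
      rw [norm_pos_iff]
      intro h0
      apply hp0
      have : vb p0.1 = 0 := (WithLp.equiv 2 (Fin d → ℝ)).symm.injective (h0.trans rfl)
      exact congrFun this p0.2
    exact lt_of_lt_of_le h0 (hmax p0.1 (Finset.mem_univ _))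
  set A := blk S i i with hA
  have hAH : A.IsHermitian := (hdiag i).1
  set cA := (specNorm A⁻¹)⁻¹ with hcA
  have hspec_lower : ∀ μ ∈ spectrum ℝ A, cA ≤ μ := fun μ hμ => posdef_spec_lower (hdiag i) hμ
  have hcApos : 0 < cA := by
    have hd := hdom i
    have hsum : 0 ≤ ∑ k ∈ univ \ {i}, specNorm (blk S i k) :=
      Finset.sum_nonneg fun k _ => specNorm_nonneg _
    exact lt_of_le_of_lt hsum hd
  have hne_spec : (spectrum ℝ A).Nonempty := ⟨_, hAH.eigenvalues_mem_spectrum_real p0.2⟩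
  have hcA_le : cA ≤ lamMin A := le_csInf hne_spec hspec_lower
  -- the norm chain bounding ‖(A - lam) v_i‖
  have hchain : ‖E (A *ᵥ vb i - lam • vb i)‖ < cA * ‖E (vb i)‖ := by
    rw [hblock i]
    have hEneg : E (- ∑ j ∈ univ \ {i}, blk S i j *ᵥ vb j)
        = - E (∑ j ∈ univ \ {i}, blk S i j *ᵥ vb j) := rfl
    have hEsum : ∀ t : Finset (Fin n), E (∑ j ∈ t, blk S i j *ᵥ vb j)
        = ∑ j ∈ t, E (blk S i j *ᵥ vb j) := by
      intro t
      induction t using Finset.induction_on with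
      | empty => rfl
      | @insert a s hns ih => rw [Finset.sum_insert hns, Finset.sum_insert hns, ← ih]; rfl
    rw [hEneg, norm_neg, hEsum]
    calc ‖∑ j ∈ univ \ {i}, E (blk S i j *ᵥ vb j)‖
        ≤ ∑ j ∈ univ \ {i}, ‖E (blk S i j *ᵥ vb j)‖ := norm_sum_le _ _
      _ ≤ ∑ j ∈ univ \ {i}, specNorm (blk S i j) * ‖E (vb i)‖ := by
          apply Finset.sum_le_sum
          intro j _
          calc ‖E (blk S i j *ᵥ vb j)‖ ≤ specNorm (blk S i j) * ‖E (vb j)‖ := norm_mulVec_le _ _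
            _ ≤ specNorm (blk S i j) * ‖E (vb i)‖ :=
                mul_le_mul_of_nonneg_left (hmax j (Finset.mem_univ _)) (specNorm_nonneg _)
      _ = (∑ j ∈ univ \ {i}, specNorm (blk S i j)) * ‖E (vb i)‖ := by rw [Finset.sum_mul]
      _ < cA * ‖E (vb i)‖ := by
          exact mul_lt_mul_of_pos_right (hdom i) hNi
  -- existence of a close eigenvalue, by contradiction
  have hex : ∃ σ ∈ spectrum ℝ A, |σ - lam| < lamMin A := by
    by_contra hcon
    push_neg at hcon
    have hall : ∀ k, lamMin A ≤ |hAH.eigenvalues k - lam| := fun k =>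
      hcon _ (hAH.eigenvalues_mem_spectrum_real k)
    have hlow := herm_lower hAH lam (lamMin A) (le_trans hcApos.le hcA_le) hall (vb i)
    have : lamMin A * ‖E (vb i)‖ < lamMin A * ‖E (vb i)‖ := by
      calc lamMin A * ‖E (vb i)‖ ≤ ‖E (A *ᵥ vb i - lam • vb i)‖ := hlow
        _ < cA * ‖E (vb i)‖ := hchain
        _ ≤ lamMin A * ‖E (vb i)‖ := mul_le_mul_of_nonneg_right hcA_le hNi.le
    exact lt_irrefl _ this
  obtain ⟨σ, hσmem, hσ⟩ := hex
  have hlmle : lamMin A ≤ σ := csInf_le ⟨cA, hspec_lower⟩ hσmem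
  have habs : σ - lam ≤ |σ - lam| := le_abs_self _
  exact ⟨by linarith, i, σ, hσmem, hσ⟩
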